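/- Constancy of the dynamic relay on intervals where the input stays between the thresholds (eq. (2.15), third case): Let y be a dynamic relay solution for (u, ξ), and let [a,b] ⊆ [0,T] be such that ρ₁ ≤ u(s) ≤ ρ₂ for a.e. s ∈ [a,b]. Then y(t) = y(a) for every t ∈ [a,b]. -/

import Mathlib

open MeasureTheory Set

/-- The function `g(u) = k·(u − ρ₂)⁺ − k·(ρ₁ − u)⁺` driving the dynamic relay. -/
noncomputable def relayG (ρ₁ ρ₂ k u : ℝ) : ℝ :=
  k * max (u - ρ₂) 0 - k * max (ρ₁ - u) 0

/-- `y` (with a.e. derivative `y'`) is a dynamic relay solution on `[0,T]` for input `u`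
and initial state `ξ`: `y ∈ H¹(0,T)` (encoded by `y' ∈ L²(0,T)` together with the
fundamental-theorem-of-calculus representation), `y(0) = ξ`, `|y| ≤ 1` on `[0,T]`, and
`q(t) := g(u(t)) − y'(t)` satisfies `q(t)(z − y(t)) ≤ 0` for all `z ∈ [−1,1]`, a.e. `t`. -/
def IsDynRelay (T ρ₁ ρ₂ k : ℝ) (u : ℝ → ℝ) (ξ : ℝ) (y y' : ℝ → ℝ) : Prop :=
  MemLp y' 2 (volume.restrict (Ioc (0:ℝ) T)) ∧
  y 0 = ξ ∧
  (∀ t ∈ Icc (0:ℝ) T, y t = ξ + ∫ s in (0:ℝ)..t, y' s) ∧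
  (∀ t ∈ Icc (0:ℝ) T, |y t| ≤ 1) ∧
  (∀ᵐ t ∂(volume.restrict (Ioo (0:ℝ) T)),
    ∀ z ∈ Icc (-1:ℝ) 1, (relayG ρ₁ ρ₂ k (u t) - y' t) * (z - y t) ≤ 0)

open intervalIntegral in
/-- One-step estimate: the squared distance to `c` grows by at most
`3 (∫ |y'|)²` across a subinterval, given the a.e. sign condition. -/
lemma relay_step (y' Y : ℝ → ℝ) (a b c : ℝ)
    (hint : ∀ x₁ x₂, a ≤ x₁ → x₁ ≤ x₂ → x₂ ≤ b → IntervalIntegrable y' volume x₁ x₂)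
    (hYd : ∀ x₁ x₂, a ≤ x₁ → x₁ ≤ x₂ → x₂ ≤ b → Y x₂ - Y x₁ = ∫ s in x₁..x₂, y' s)
    (hYc : ContinuousOn Y (Icc a b))
    (hae : ∀ᵐ s ∂(volume : Measure ℝ), s ∈ Ioc a b → y' s * (Y s - c) ≤ 0)
    (s₁ s₂ : ℝ) (h1 : a ≤ s₁) (h12 : s₁ ≤ s₂) (h2 : s₂ ≤ b) :
    (Y s₂ - c)^2 ≤ (Y s₁ - c)^2 + 3 * (∫ s in s₁..s₂, |y' s|)^2 := by
  set E : ℝ := ∫ s in s₁..s₂, |y' s| with hE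
  have hIy : IntervalIntegrable y' volume s₁ s₂ := hint _ _ h1 h12 h2
  have hIabs : IntervalIntegrable (fun s => |y' s|) volume s₁ s₂ := hIy.abs
  have hsub : Icc s₁ s₂ ⊆ Icc a b := Icc_subset_Icc h1 h2
  have hYc' : ContinuousOn Y (Set.uIcc s₁ s₂) := by
    rw [uIcc_of_le h12]; exact hYc.mono hsub
  have hI1 : IntervalIntegrable (fun s => y' s * (Y s - c)) volume s₁ s₂ :=
    hIy.mul_continuousOn (hYc'.sub continuousOn_const)
  have hI2 : IntervalIntegrable (fun s => y' s * (Y s₁ - Y s)) volume s₁ s₂ :=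
    hIy.mul_continuousOn (continuousOn_const.sub hYc')
  have hD : Y s₂ - Y s₁ = ∫ s in s₁..s₂, y' s := hYd _ _ h1 h12 h2
  have hDle : |Y s₂ - Y s₁| ≤ E := by
    rw [hD]; exact abs_integral_le_integral_abs h12
  have hEnn : 0 ≤ E :=
    integral_nonneg h12 (fun u _ => abs_nonneg _)
  -- first integral nonpositive
  have hne_a : ∀ᵐ s : ℝ ∂volume, s ≠ a := by
    rw [ae_iff]
    refine measure_mono_null (fun x hx => ?_) (measure_singleton a)
    simpa using not_not.mp hx
  have h5 : (∫ s in s₁..s₂, y' s * (Y s - c)) ≤ 0 := by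
    have hneg : 0 ≤ ∫ s in s₁..s₂, -(y' s * (Y s - c)) := by
      refine integral_nonneg_of_ae_restrict h12 ?_
      have hh : ∀ᵐ s ∂(volume.restrict (Icc s₁ s₂)), 0 ≤ -(y' s * (Y s - c)) := by
        rw [ae_restrict_iff' measurableSet_Icc]
        filter_upwards [hae, hne_a] with s hs hsa hsmem
        have hsab : s ∈ Ioc a b := by
          constructor
          · exact lt_of_le_of_ne (h1.trans hsmem.1) (Ne.symm hsa)
          · exact hsmem.2.trans h2
        simpa using hs hsab
      exact hh
    rw [intervalIntegral.integral_neg] at hneg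
    linarith
  -- second integral bound
  have h6 : (∫ s in s₁..s₂, y' s * (Y s₁ - Y s)) ≤ E * E := by
    have hmono : (∫ s in s₁..s₂, y' s * (Y s₁ - Y s)) ≤ ∫ s in s₁..s₂, |y' s| * E := by
      refine integral_mono_on h12 hI2 (hIabs.mul_const E) ?_
      intro x hx
      have hYx : |Y s₁ - Y x| ≤ E := by
        have h' : Y x - Y s₁ = ∫ s in s₁..x, y' s := hYd s₁ x h1 hx.1 (hx.2.trans h2)
        rw [abs_sub_comm, h']
        calc |∫ s in s₁..x, y' s| ≤ ∫ s in s₁..x, |y' s| :=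
              abs_integral_le_integral_abs hx.1
          _ ≤ E := by
              refine integral_mono_interval le_rfl hx.1 hx.2 ?_ hIabs
              exact Filter.Eventually.of_forall (fun s => abs_nonneg _)
      calc y' x * (Y s₁ - Y x) ≤ |y' x * (Y s₁ - Y x)| := le_abs_self _
        _ = |y' x| * |Y s₁ - Y x| := abs_mul _ _
        _ ≤ |y' x| * E := mul_le_mul_of_nonneg_left hYx (abs_nonneg _)
    rwa [intervalIntegral.integral_mul_const, ← hE, mul_comm E] at hmono
  -- combine
  have h8 : (Y s₁ - c) * (Y s₂ - Y s₁) =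
      (∫ s in s₁..s₂, y' s * (Y s - c)) + ∫ s in s₁..s₂, y' s * (Y s₁ - Y s) := by
    rw [← integral_add hI1 hI2]
    have : (fun s => y' s * (Y s - c) + y' s * (Y s₁ - Y s)) =
        fun s => y' s * (Y s₁ - c) := by funext s; ring
    rw [this, intervalIntegral.integral_mul_const, ← hD]
    ring
  have hcross : (Y s₁ - c) * (Y s₂ - Y s₁) ≤ E * E := by
    rw [h8]; linarith
  have hsq : (Y s₂ - Y s₁)^2 ≤ E^2 := by
    have := abs_le.mp hDle
    exact sq_le_sq' (by linarith) (by linarith)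
  nlinarith [hsq, hcross]

set_option maxHeartbeats 1000000 in
open intervalIntegral in
/-- Constancy of the dynamic relay on intervals where the input stays between
the thresholds (eq. (2.15), third case). -/
theorem dyn_relay_constant_between_thresholds (T ρ₁ ρ₂ k : ℝ)
    (hT : 0 < T) (hρ : ρ₁ < ρ₂) (hk : 0 < k)
    (u : ℝ → ℝ) (hu : MemLp u 2 (volume.restrict (Ioc (0:ℝ) T)))
    (ξ : ℝ) (hξ : ξ ∈ Icc (-1:ℝ) 1)
    (y y' : ℝ → ℝ) (hy : IsDynRelay T ρ₁ ρ₂ k u ξ y y')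
    (a b : ℝ) (ha : 0 ≤ a) (hab : a ≤ b) (hb : b ≤ T)
    (hub : ∀ᵐ s ∂(volume.restrict (Icc a b)), ρ₁ ≤ u s ∧ u s ≤ ρ₂) :
    ∀ t ∈ Icc a b, y t = y a := by
  obtain ⟨hL2, hy0, hFTC, hbd, hVI⟩ := hy
  -- basic integrability
  have hintT : IntegrableOn y' (Ioc 0 T) := hL2.integrable (by norm_num)
  have hII : ∀ x₁ x₂ : ℝ, 0 ≤ x₁ → x₁ ≤ x₂ → x₂ ≤ T → IntervalIntegrable y' volume x₁ x₂ := by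
    intro x₁ x₂ h0 h12 hT'
    rw [intervalIntegrable_iff_integrableOn_Ioc_of_le h12]
    exact hintT.mono_set (Ioc_subset_Ioc h0 hT')
  -- the continuous representative
  set Y : ℝ → ℝ := fun x => ξ + ∫ s in (0:ℝ)..x, y' s with hYdef
  have hYeq : ∀ x ∈ Icc (0:ℝ) T, y x = Y x := hFTC
  have habT : Icc a b ⊆ Icc (0:ℝ) T := Icc_subset_Icc ha hb
  have hYd : ∀ x₁ x₂ : ℝ, a ≤ x₁ → x₁ ≤ x₂ → x₂ ≤ b → Y x₂ - Y x₁ = ∫ s in x₁..x₂, y' s := by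
    intro x₁ x₂ h1 h12 h2
    have e : Y x₂ - Y x₁ = (∫ s in (0:ℝ)..x₂, y' s) - ∫ s in (0:ℝ)..x₁, y' s := by
      simp [hYdef]
    rw [e, integral_interval_sub_left (hII 0 x₂ le_rfl (ha.trans (h1.trans h12)) (h2.trans hb))
      (hII 0 x₁ le_rfl (ha.trans h1) ((h12.trans h2).trans hb))]
  have hint' : ∀ x₁ x₂ : ℝ, a ≤ x₁ → x₁ ≤ x₂ → x₂ ≤ b → IntervalIntegrable y' volume x₁ x₂ :=
    fun x₁ x₂ h1 h12 h2 => hII x₁ x₂ (ha.trans h1) h12 (h2.trans hb)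
  have hYc : ContinuousOn Y (Icc a b) := by
    have hc : ContinuousOn (fun x => ∫ s in (0:ℝ)..x, y' s) (Set.uIcc (0:ℝ) T) :=
      continuousOn_primitive_interval' (hII 0 T le_rfl hT.le le_rfl) left_mem_uIcc
    rw [uIcc_of_le hT.le] at hc
    exact (continuousOn_const.add hc).mono habT
  set c : ℝ := Y a with hcdef
  have haT : a ∈ Icc (0:ℝ) T := ⟨ha, hab.trans hb⟩
  have hya : y a = c := hYeq a haT
  have hc1 : c ∈ Icc (-1:ℝ) 1 := by
    have := hbd a haT
    rw [hya] at this
    exact abs_le.mp this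
  -- a.e. sign condition
  have hae : ∀ᵐ s ∂(volume : Measure ℝ), s ∈ Ioc a b → y' s * (Y s - c) ≤ 0 := by
    have h1 := (ae_restrict_iff' measurableSet_Ioo).mp hVI
    have h2 := (ae_restrict_iff' measurableSet_Icc).mp hub
    have h3 : ∀ᵐ s : ℝ ∂volume, s ≠ T := by
      rw [ae_iff]
      refine measure_mono_null (fun x hx => ?_) (measure_singleton T)
      simpa using not_not.mp hx
    filter_upwards [h1, h2, h3] with s hs1 hs2 hs3 hs
    have hsab : s ∈ Icc a b := ⟨hs.1.le, hs.2⟩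
    have h0T : s ∈ Ioo 0 T :=
      ⟨lt_of_le_of_lt ha hs.1, lt_of_le_of_ne (hs.2.trans hb) hs3⟩
    obtain ⟨hρ1, hρ2⟩ := hs2 hsab
    have hg0 : relayG ρ₁ ρ₂ k (u s) = 0 := by
      unfold relayG
      rw [max_eq_right (by linarith), max_eq_right (by linarith)]
      ring
    have hz := hs1 h0T c hc1
    rw [hg0, hYeq s ⟨h0T.1.le, h0T.2.le⟩] at hz
    calc y' s * (Y s - c) = (0 - y' s) * (c - Y s) := by ring
      _ ≤ 0 := hz
  -- now the discretization argument
  intro t ht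
  have htT : t ∈ Icc (0:ℝ) T := habT ht
  rw [hYeq t htT, hya]
  -- the primitive of |y'|
  set G : ℝ → ℝ := fun x => ∫ s in a..x, |y' s| with hGdef
  have hIabs : IntervalIntegrable (fun s => |y' s|) volume a b := (hint' a b le_rfl hab le_rfl).abs
  have hGd : ∀ x₁ x₂ : ℝ, a ≤ x₁ → x₁ ≤ x₂ → x₂ ≤ b →
      G x₂ - G x₁ = ∫ s in x₁..x₂, |y' s| := by
    intro x₁ x₂ h1 h12 h2
    exact integral_interval_sub_left ((hint' a x₂ le_rfl (h1.trans h12) h2).abs)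
      ((hint' a x₁ le_rfl h1 (h12.trans h2)).abs)
  have hGc : ContinuousOn G (Icc a b) := by
    have hc := continuousOn_primitive_interval' hIabs (left_mem_uIcc (a := a) (b := b))
    rwa [uIcc_of_le hab] at hc
  have hGuc : UniformContinuousOn G (Icc a b) :=
    isCompact_Icc.uniformContinuousOn_of_continuous hGc
  have hGt0 : 0 ≤ G t := integral_nonneg ht.1 (fun s _ => abs_nonneg _)
  -- key estimate
  have key : ∀ ε > (0:ℝ), (Y t - c)^2 ≤ ε := by
    intro ε hε
    set ε' : ℝ := ε / (3 * (G t + 1)) with hε'def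
    have hε' : 0 < ε' := by positivity
    obtain ⟨δ, hδ, hδ'⟩ := Metric.uniformContinuousOn_iff.mp hGuc ε' hε'
    obtain ⟨n₀, hn₀⟩ := exists_nat_gt ((t - a) / δ)
    set N : ℕ := max n₀ 1 with hNdef
    have hN1 : 1 ≤ N := le_max_right _ _
    have hNpos : (0:ℝ) < N := by exact_mod_cast Nat.lt_of_lt_of_le Nat.zero_lt_one hN1
    set h : ℝ := (t - a) / N with hhdef
    have hta : 0 ≤ t - a := sub_nonneg.mpr ht.1
    have hh0 : 0 ≤ h := div_nonneg hta hNpos.le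
    have hhδ : h < δ := by
      rw [hhdef, div_lt_iff₀ hNpos]
      have hn₀' : (t - a) / δ < N := hn₀.trans_le (by exact_mod_cast le_max_left n₀ 1)
      calc t - a = (t - a) / δ * δ := by field_simp
        _ < N * δ := by exact mul_lt_mul_of_pos_right hn₀' hδ
        _ = δ * N := mul_comm _ _
    set p : ℕ → ℝ := fun i => a + i * h with hpdef
    have hp0 : p 0 = a := by simp [hpdef]
    have hpN : p N = t := by
      simp only [hpdef, hhdef]
      field_simp
      ring
    have hpmono : ∀ i j : ℕ, i ≤ j → p i ≤ p j := by
      intro i j hij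
      simp only [hpdef]
      have : (i:ℝ) ≤ j := by exact_mod_cast hij
      nlinarith
    have hpmem : ∀ i : ℕ, i ≤ N → p i ∈ Icc a b := by
      intro i hi
      constructor
      · simpa [hp0] using hpmono 0 i (Nat.zero_le i)
      · have := hpmono i N hi
        rw [hpN] at this
        exact this.trans ht.2
    have hstep : ∀ i : ℕ, p (i+1) - p i = h := by
      intro i; simp only [hpdef]; push_cast; ring
    -- per-interval bound
    have hterm : ∀ i : ℕ, i < N →
        (Y (p (i+1)) - c)^2 - (Y (p i) - c)^2 ≤ 3 * (ε' * (G (p (i+1)) - G (p i))) := by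
      intro i hi
      have hi1 : i + 1 ≤ N := hi
      have hm1 := hpmem i (le_of_lt hi)
      have hm2 := hpmem (i+1) hi1
      have hle : p i ≤ p (i+1) := hpmono i (i+1) (Nat.le_succ i)
      have hEeq : G (p (i+1)) - G (p i) = ∫ s in p i..p (i+1), |y' s| :=
        hGd _ _ hm1.1 hle hm2.2
      have hstepb := relay_step y' Y a b c hint' hYd hYc hae (p i) (p (i+1))
        hm1.1 hle hm2.2
      have hEnn : 0 ≤ G (p (i+1)) - G (p i) := by
        rw [hEeq]; exact integral_nonneg hle (fun s _ => abs_nonneg _)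
      have hEsmall : G (p (i+1)) - G (p i) ≤ ε' := by
        have hdist : dist (p (i+1)) (p i) < δ := by
          rw [Real.dist_eq, hstep i, abs_of_nonneg hh0]; exact hhδ
        have := hδ' (p (i+1)) hm2 (p i) hm1 hdist
        rw [Real.dist_eq] at this
        calc G (p (i+1)) - G (p i) ≤ |G (p (i+1)) - G (p i)| := le_abs_self _
          _ ≤ ε' := this.le
      have hsq : (G (p (i+1)) - G (p i))^2 ≤ ε' * (G (p (i+1)) - G (p i)) := by
        nlinarith
      rw [← hEeq] at hstepb
      nlinarith
    -- telescoping
    have htel : ∑ i ∈ Finset.range N, ((Y (p (i+1)) - c)^2 - (Y (p i) - c)^2)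
        = (Y t - c)^2 := by
      have h := Finset.sum_range_sub (fun i => (Y (p i) - c)^2) N
      simp only [hpN, hp0, ← hcdef, sub_self] at h
      simpa using h
    have htelG : ∑ i ∈ Finset.range N, (G (p (i+1)) - G (p i)) = G t := by
      have h := Finset.sum_range_sub (fun i => G (p i)) N
      have hGa : G a = 0 := by
        simp only [hGdef]
        exact intervalIntegral.integral_same
      simp only [hpN, hp0, hGa, sub_zero] at h
      exact h
    have hsum : (Y t - c)^2 ≤ 3 * (ε' * G t) := by
      rw [← htel, ← htelG, Finset.mul_sum, Finset.mul_sum]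
      exact Finset.sum_le_sum (fun i hi => hterm i (Finset.mem_range.mp hi))
    calc (Y t - c)^2 ≤ 3 * (ε' * G t) := hsum
      _ = ε * (G t / (G t + 1)) := by
          rw [hε'def]; field_simp
      _ ≤ ε * 1 := by
          apply mul_le_mul_of_nonneg_left _ hε.le
          rw [div_le_one (by positivity)]
          linarith
      _ = ε := mul_one ε
  -- conclude
  have h0 : (Y t - c)^2 ≤ 0 := by
    by_contra hcon
    push_neg at hcon
    have h2 := key ((Y t - c)^2 / 2) (by positivity)
    have h3 : (Y t - c)^2 / 2 < (Y t - c)^2 := half_lt_self hcon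
    linarith
  have : (Y t - c)^2 = 0 := le_antisymm h0 (sq_nonneg _)
  have := (pow_eq_zero_iff two_ne_zero).mp this
  linarith [sub_eq_zero.mp this]
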